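/- arXiv:1207.2062 — 2 statements merged into one kernel-verified Lean document; each statement's English description precedes it below -/
import Mathlib

section
/- Let n, r, s be natural numbers and let N and R be real n×(r+s) matrices with columns indexed by Fin r ⊕ Fin s. Assume the first block of r columns of R is zero, NᵀN is invertible, and K := NᵀR has the block form fromBlocks 0 0 0 K⋆ where the s×s matrix K⋆ is symmetric and positive definite. Set K† := fromBlocks 0 0 0 K⋆⁻¹, P := I − N(NᵀN)⁻¹Nᵀ, and M := R K† Rᵀ + α P with α ≥ 0. Then M is symmetric and positive semidefinite, i.e. Mᵀ = M and xᵀ M x ≥ 0 for all x ∈ ℝⁿ. -/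
open Matrix

lemma aux_S_psd {s : ℕ} {r : ℕ} (Kstar : Matrix (Fin s) (Fin s) ℝ)
    (hKsym : Kstar.IsSymm) (hKpd : Kstar.PosDef) :
    (Matrix.fromBlocks 0 0 0 Kstar⁻¹ :
      Matrix (Fin r ⊕ Fin s) (Fin r ⊕ Fin s) ℝ).PosSemidef := by
  have hinv : (Kstar⁻¹).PosSemidef := hKpd.inv.posSemidef
  rw [posSemidef_iff_dotProduct_mulVec]
  constructor
  · show _ᴴ = _
    rw [conjTranspose_eq_transpose_of_trivial, fromBlocks_transpose]
    simp only [transpose_zero]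
    congr 1
    rw [transpose_nonsing_inv, hKsym.eq]
  · intro x
    have hx : x = Sum.elim (x ∘ Sum.inl) (x ∘ Sum.inr) := by
      funext i; cases i <;> rfl
    have hm : (Matrix.fromBlocks 0 0 0 Kstar⁻¹ :
        Matrix (Fin r ⊕ Fin s) (Fin r ⊕ Fin s) ℝ) *ᵥ x
        = Sum.elim (0 : Fin r → ℝ) (Kstar⁻¹ *ᵥ (x ∘ Sum.inr)) := by
      conv_lhs => rw [hx]
      rw [fromBlocks_mulVec]
      simp
    rw [hm, star_trivial]
    conv_lhs => rw [← dotProduct_zero (x ∘ Sum.inl)]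
    nth_rewrite 2 [hx]
    rw [sumElim_dotProduct_sumElim, dotProduct_zero]
    have := hinv.dotProduct_mulVec_nonneg (x ∘ Sum.inr)
    rw [star_trivial] at this
    simpa using this

/-- Symmetry and positive semidefiniteness of the local mimetic stiffness matrix
`M = R K† Rᵀ + α P`. -/
theorem mimetic_psd (n r s : ℕ)
    (N R : Matrix (Fin n) (Fin r ⊕ Fin s) ℝ)
    (hR0 : ∀ (i : Fin n) (j : Fin r), R i (Sum.inl j) = 0)
    (hNN : IsUnit (Nᵀ * N))
    (Kstar : Matrix (Fin s) (Fin s) ℝ)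
    (hK : Nᵀ * R = Matrix.fromBlocks 0 0 0 Kstar)
    (hKsym : Kstar.IsSymm)
    (hKpd : Kstar.PosDef)
    (α : ℝ) (hα : 0 ≤ α) :
    (R * (Matrix.fromBlocks 0 0 0 Kstar⁻¹ :
        Matrix (Fin r ⊕ Fin s) (Fin r ⊕ Fin s) ℝ) * Rᵀ
      + α • ((1 : Matrix (Fin n) (Fin n) ℝ) - N * (Nᵀ * N)⁻¹ * Nᵀ))ᵀ
      = R * (Matrix.fromBlocks 0 0 0 Kstar⁻¹ :
        Matrix (Fin r ⊕ Fin s) (Fin r ⊕ Fin s) ℝ) * Rᵀ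
      + α • ((1 : Matrix (Fin n) (Fin n) ℝ) - N * (Nᵀ * N)⁻¹ * Nᵀ) ∧
    ∀ x : Fin n → ℝ,
      0 ≤ x ⬝ᵥ (R * (Matrix.fromBlocks 0 0 0 Kstar⁻¹ :
          Matrix (Fin r ⊕ Fin s) (Fin r ⊕ Fin s) ℝ) * Rᵀ
        + α • ((1 : Matrix (Fin n) (Fin n) ℝ) - N * (Nᵀ * N)⁻¹ * Nᵀ)).mulVec x := by
  set S : Matrix (Fin r ⊕ Fin s) (Fin r ⊕ Fin s) ℝ := Matrix.fromBlocks 0 0 0 Kstar⁻¹ with hS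
  have hSpsd : S.PosSemidef := aux_S_psd Kstar hKsym hKpd
  have hSsym : Sᵀ = S := by
    have := hSpsd.1
    rwa [IsHermitian, conjTranspose_eq_transpose_of_trivial] at this
  -- Gram matrix G and its inverse symmetry
  have hGsym : (Nᵀ * N)ᵀ = Nᵀ * N := by rw [transpose_mul, transpose_transpose]
  have hGinvsym : ((Nᵀ * N)⁻¹)ᵀ = (Nᵀ * N)⁻¹ := by
    rw [transpose_nonsing_inv, hGsym]
  set P : Matrix (Fin n) (Fin n) ℝ :=
    (1 : Matrix (Fin n) (Fin n) ℝ) - N * (Nᵀ * N)⁻¹ * Nᵀ with hP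
  have hPsym : Pᵀ = P := by
    rw [hP, transpose_sub, transpose_one, transpose_mul, transpose_mul,
      transpose_transpose, hGinvsym, Matrix.mul_assoc]
  have hdet : IsUnit (Nᵀ * N).det := (isUnit_iff_isUnit_det _).mp hNN
  have hPidem : P * P = P := by
    rw [hP]
    have h1 : (Nᵀ * N)⁻¹ * (Nᵀ * N) = 1 := nonsing_inv_mul _ hdet
    simp only [Matrix.sub_mul, Matrix.mul_sub, Matrix.one_mul, Matrix.mul_one]
    have h2 : N * (Nᵀ * N)⁻¹ * Nᵀ * (N * (Nᵀ * N)⁻¹ * Nᵀ)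
        = N * (Nᵀ * N)⁻¹ * Nᵀ := by
      calc N * (Nᵀ * N)⁻¹ * Nᵀ * (N * (Nᵀ * N)⁻¹ * Nᵀ)
          = N * (((Nᵀ * N)⁻¹ * (Nᵀ * N)) * ((Nᵀ * N)⁻¹ * Nᵀ)) := by
            simp only [Matrix.mul_assoc]
        _ = N * (Nᵀ * N)⁻¹ * Nᵀ := by rw [h1, Matrix.one_mul, Matrix.mul_assoc]
    rw [h2]
    abel
  have hPpsd : P.PosSemidef := by
    have : P = Pᴴ * P := by
      rw [conjTranspose_eq_transpose_of_trivial, hPsym, hPidem]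
    rw [this]
    exact posSemidef_conjTranspose_mul_self P
  have hRpsd : (R * S * Rᵀ).PosSemidef := by
    have := hSpsd.mul_mul_conjTranspose_same R
    rwa [conjTranspose_eq_transpose_of_trivial] at this
  constructor
  · rw [transpose_add, transpose_smul, hPsym, transpose_mul, transpose_mul,
      transpose_transpose, hSsym, Matrix.mul_assoc]
  · intro x
    have h1 : (0:ℝ) ≤ x ⬝ᵥ (R * S * Rᵀ) *ᵥ x := by
      have := hRpsd.dotProduct_mulVec_nonneg x
      simpa using this
    have h2 : (0:ℝ) ≤ x ⬝ᵥ P *ᵥ x := by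
      have := hPpsd.dotProduct_mulVec_nonneg x
      simpa using this
    rw [add_mulVec, dotProduct_add, smul_mulVec, dotProduct_smul]
    have : (0:ℝ) ≤ α • (x ⬝ᵥ P *ᵥ x) := smul_nonneg hα h2
    exact add_nonneg h1 this
end

section
/- Let m, d be natural numbers and let N̄ and R̄ be real m×d matrices. Assume that N̄ᵀN̄ is invertible and that K̄ := N̄ᵀR̄ is symmetric and positive definite (hence invertible). Define P̄ := I − N̄(N̄ᵀN̄)⁻¹N̄ᵀ and, for α ≥ 0, M̄ := R̄ K̄⁻¹ R̄ᵀ + α P̄. Then M̄ N̄ = R̄, and M̄ is symmetric and positive semidefinite. -/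
open Matrix

/-- The local matrix `M̄ = R̄ K̄⁻¹ R̄ᵀ + α P̄` of the mimetic scalar product on the
discrete shear space: consistency `M̄ N̄ = R̄`, symmetry and positive semidefiniteness. -/
theorem mimetic_shear_scalar_product (m d : ℕ)
    (Nb Rb : Matrix (Fin m) (Fin d) ℝ)
    (hNN : IsUnit (Nbᵀ * Nb))
    (hKsym : (Nbᵀ * Rb).IsSymm)
    (hKpd : (Nbᵀ * Rb).PosDef)
    (α : ℝ) (hα : 0 ≤ α) :
    (Rb * (Nbᵀ * Rb)⁻¹ * Rbᵀ
      + α • ((1 : Matrix (Fin m) (Fin m) ℝ) - Nb * (Nbᵀ * Nb)⁻¹ * Nbᵀ)) * Nb = Rb ∧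
    (Rb * (Nbᵀ * Rb)⁻¹ * Rbᵀ
      + α • ((1 : Matrix (Fin m) (Fin m) ℝ) - Nb * (Nbᵀ * Nb)⁻¹ * Nbᵀ))ᵀ
      = Rb * (Nbᵀ * Rb)⁻¹ * Rbᵀ
      + α • ((1 : Matrix (Fin m) (Fin m) ℝ) - Nb * (Nbᵀ * Nb)⁻¹ * Nbᵀ) ∧
    ∀ x : Fin m → ℝ,
      0 ≤ x ⬝ᵥ (Rb * (Nbᵀ * Rb)⁻¹ * Rbᵀ
        + α • ((1 : Matrix (Fin m) (Fin m) ℝ) - Nb * (Nbᵀ * Nb)⁻¹ * Nbᵀ)).mulVec x := by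
  have hKdet : IsUnit (Nbᵀ * Rb).det := isUnit_iff_ne_zero.mpr (ne_of_gt hKpd.det_pos)
  have hNdet : IsUnit (Nbᵀ * Nb).det := (Matrix.isUnit_iff_isUnit_det _).mp hNN
  have hKinv : (Nbᵀ * Rb)⁻¹ * (Nbᵀ * Rb) = 1 := Matrix.nonsing_inv_mul _ hKdet
  have hNinv : (Nbᵀ * Nb)⁻¹ * (Nbᵀ * Nb) = 1 := Matrix.nonsing_inv_mul _ hNdet
  have hNinv' : (Nbᵀ * Nb) * (Nbᵀ * Nb)⁻¹ = 1 := Matrix.mul_nonsing_inv _ hNdet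
  have hRtN : Rbᵀ * Nb = Nbᵀ * Rb := by
    calc Rbᵀ * Nb = (Nbᵀ * Rb)ᵀ := by simp [Matrix.transpose_mul]
    _ = Nbᵀ * Rb := hKsym
  set Q : Matrix (Fin m) (Fin m) ℝ := Nb * (Nbᵀ * Nb)⁻¹ * Nbᵀ with hQ
  set P : Matrix (Fin m) (Fin m) ℝ := 1 - Q with hP
  have hQN : Q * Nb = Nb := by
    rw [hQ]
    simp only [Matrix.mul_assoc]
    rw [hNinv, Matrix.mul_one]
  have hPN : P * Nb = 0 := by rw [hP, Matrix.sub_mul, Matrix.one_mul, hQN, sub_self]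
  have hQsymm : Qᵀ = Q := by
    rw [hQ]
    simp [Matrix.transpose_mul, Matrix.transpose_nonsing_inv, Matrix.mul_assoc]
  have hPsymm : Pᵀ = P := by rw [hP, Matrix.transpose_sub, Matrix.transpose_one, hQsymm]
  have hQQ : Q * Q = Q := by
    rw [hQ]
    calc Nb * (Nbᵀ * Nb)⁻¹ * Nbᵀ * (Nb * (Nbᵀ * Nb)⁻¹ * Nbᵀ)
        = Nb * ((Nbᵀ * Nb)⁻¹ * ((Nbᵀ * Nb) * ((Nbᵀ * Nb)⁻¹ * Nbᵀ))) := by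
          simp only [Matrix.mul_assoc]
      _ = Nb * (Nbᵀ * Nb)⁻¹ * Nbᵀ := by
          rw [← Matrix.mul_assoc (Nbᵀ * Nb), hNinv', Matrix.one_mul, Matrix.mul_assoc]
  have hPP : P * P = P := by
    rw [hP, Matrix.sub_mul, Matrix.mul_sub, Matrix.mul_sub, Matrix.one_mul, Matrix.mul_one,
      Matrix.one_mul, hQQ]
    abel
  have hKinvT : ((Nbᵀ * Rb)⁻¹)ᵀ = (Nbᵀ * Rb)⁻¹ := by
    rw [Matrix.transpose_nonsing_inv, hKsym.eq]
  have hMsymm : (Rb * (Nbᵀ * Rb)⁻¹ * Rbᵀ + α • P)ᵀ = Rb * (Nbᵀ * Rb)⁻¹ * Rbᵀ + α • P := by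
    rw [Matrix.transpose_add, Matrix.transpose_smul, hPsymm, Matrix.transpose_mul,
      Matrix.transpose_mul, hKinvT, Matrix.transpose_transpose]
    simp only [Matrix.mul_assoc]
  refine ⟨?_, hMsymm, ?_⟩
  · rw [Matrix.add_mul, Matrix.smul_mul, hPN, smul_zero, add_zero, Matrix.mul_assoc,
      hRtN, Matrix.mul_assoc, hKinv, Matrix.mul_one]
  · intro x
    rw [Matrix.add_mulVec, dotProduct_add]
    have h1 : 0 ≤ x ⬝ᵥ (Rb * (Nbᵀ * Rb)⁻¹ * Rbᵀ).mulVec x := by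
      have hinv : ((Nbᵀ * Rb)⁻¹).PosSemidef := hKpd.inv.posSemidef
      have := hinv.dotProduct_mulVec_nonneg (Rbᵀ.mulVec x)
      have heq : x ⬝ᵥ (Rb * (Nbᵀ * Rb)⁻¹ * Rbᵀ).mulVec x
          = (Rbᵀ.mulVec x) ⬝ᵥ ((Nbᵀ * Rb)⁻¹).mulVec (Rbᵀ.mulVec x) := by
        rw [← Matrix.mulVec_mulVec, ← Matrix.mulVec_mulVec,
          Matrix.dotProduct_mulVec x Rb, ← Matrix.mulVec_transpose]
      rw [heq]
      simpa using this
    have h2 : 0 ≤ x ⬝ᵥ (α • P).mulVec x := by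
      have hx : x ⬝ᵥ P.mulVec x = (P.mulVec x) ⬝ᵥ (P.mulVec x) := by
        conv_lhs => rw [← hPP, ← hPsymm]
        rw [← Matrix.mulVec_mulVec, Matrix.dotProduct_mulVec x Pᵀ, hPsymm,
          ← Matrix.mulVec_transpose, hPsymm]
      have hnn : 0 ≤ (P.mulVec x) ⬝ᵥ (P.mulVec x) :=
        Finset.sum_nonneg fun i _ => mul_self_nonneg _
      rw [Matrix.smul_mulVec, dotProduct_smul, hx]
      exact smul_nonneg hα hnn
    exact add_nonneg h1 h2
end
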